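/- ₃F₂(1, 1, c; 2, f; 1) = (f − 1) · ∑ₙ₌₀^∞ 1/((f − 1 + n)(f − c + n)), for real f > c > 0 with f > 1. -/

import Mathlib

open Real Filter

/-- Pochhammer symbol (rising factorial) for a real argument. -/
noncomputable def poch (q : ℝ) (n : ℕ) : ℝ := ∏ i ∈ Finset.range n, (q + i)

lemma poch_pos {q : ℝ} (hq : 0 < q) (n : ℕ) : 0 < poch q n :=
  Finset.prod_pos fun i _ => by positivity
lemma poch_succ (q : ℝ) (n : ℕ) : poch q (n + 1) = poch q n * (q + n) :=
  Finset.prod_range_succ _ n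

noncomputable def Aa (c b : ℝ) (n : ℕ) : ℝ := poch c n / poch b n

lemma Aa_pos {c b : ℝ} (hc : 0 < c) (hb : 0 < b) (n : ℕ) : 0 < Aa c b n :=
  div_pos (poch_pos hc n) (poch_pos hb n)

lemma Aa_zero (c b : ℝ) : Aa c b 0 = 1 := by simp [Aa, poch]

lemma Aa_succ {c b : ℝ} (hc : 0 < c) (hb : 0 < b) (n : ℕ) :
    Aa c b (n + 1) = Aa c b n * ((c + n) / (b + n)) := by
  unfold Aa
  rw [poch_succ, poch_succ]
  have h1 : poch b n ≠ 0 := (poch_pos hb n).ne'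
  have h2 : (b + n : ℝ) ≠ 0 := by positivity
  field_simp

lemma Aa_sub_succ {c b : ℝ} (hc : 0 < c) (hcb : c < b) (n : ℕ) :
    Aa c b n - Aa c b (n + 1) = Aa c b n * ((b - c) / (b + n)) := by
  have hb : 0 < b := hc.trans hcb
  rw [Aa_succ hc hb]
  have h2 : (b + n : ℝ) ≠ 0 := by positivity
  field_simp
  ring

lemma Aa_antitone {c b : ℝ} (hc : 0 < c) (hcb : c < b) : Antitone (Aa c b) := by
  have hb : 0 < b := hc.trans hcb
  apply antitone_nat_of_succ_le
  intro n
  have := Aa_sub_succ hc hcb n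
  nlinarith [Aa_pos hc hb n, Aa_pos hc hb (n + 1),
    mul_pos (Aa_pos hc hb n) (div_pos (by linarith : (0:ℝ) < b - c) (by positivity : (0:ℝ) < b + n))]

lemma tendsto_Aa {c b : ℝ} (hc : 0 < c) (hcb : c < b) :
    Tendsto (Aa c b) atTop (nhds 0) := by
  have hb : 0 < b := hc.trans hcb
  have hbdd : BddBelow (Set.range (Aa c b)) := ⟨0, by rintro x ⟨n, rfl⟩; exact (Aa_pos hc hb n).le⟩
  have hlim := tendsto_atTop_ciInf (Aa_antitone hc hcb) hbdd
  set L := ⨅ n, Aa c b n with hL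
  have hLle : ∀ n, L ≤ Aa c b n := fun n => ciInf_le hbdd n
  have hL0 : 0 ≤ L := le_ciInf fun n => (Aa_pos hc hb n).le
  rcases eq_or_lt_of_le hL0 with h | h
  · rwa [← h] at hlim
  · exfalso
    -- partial sums of the telescoping differences are bounded by Aa c b 0
    have hsum : Summable (fun n : ℕ => L * (b - c) / (b + n)) := by
      apply summable_of_sum_range_le (c := Aa c b 0)
      · intro n
        have : (0:ℝ) < b + n := by positivity
        have : (0:ℝ) < b - c := by linarith
        positivity
      · intro N
        calc ∑ i ∈ Finset.range N, L * (b - c) / (b + i)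
            ≤ ∑ i ∈ Finset.range N, (Aa c b i - Aa c b (i + 1)) := by
              apply Finset.sum_le_sum
              intro i _
              rw [Aa_sub_succ hc hcb, mul_div_assoc]
              exact mul_le_mul_of_nonneg_right (hLle i)
                (div_nonneg (by linarith) (by positivity))
          _ = Aa c b 0 - Aa c b N := Finset.sum_range_sub' (Aa c b) N
          _ ≤ Aa c b 0 := by linarith [Aa_pos hc hb N]
    have hne : L * (b - c) ≠ 0 := ne_of_gt (mul_pos h (by linarith))
    have hsum2 : Summable (fun n : ℕ => 1 / (b + n)) := by
      have := hsum.mul_left (L * (b - c))⁻¹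
      apply this.congr
      intro n
      rw [div_eq_mul_inv, inv_mul_cancel_left₀ hne, one_div]
    set k := ⌈b⌉₊ with hk
    have hbk : b ≤ k := Nat.le_ceil b
    have hsum3 : Summable (fun n : ℕ => 1 / ((n + k : ℕ) : ℝ)) := by
      apply Summable.of_nonneg_of_le (fun n => by positivity) _ hsum2
      intro n
      push_cast
      apply one_div_le_one_div_of_le (by positivity)
      linarith
    have := (summable_nat_add_iff (f := fun n : ℕ => 1 / (n:ℝ)) k).mp hsum3
    exact Real.not_summable_one_div_natCast this

lemma poch_succ'' (q : ℝ) (n : ℕ) : poch q (n + 1) = q * poch (q + 1) n := by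
  unfold poch
  rw [Finset.prod_range_succ']
  simp only [Nat.cast_zero, add_zero]
  rw [mul_comm]
  congr 1
  apply Finset.prod_congr rfl
  intro i _
  push_cast
  ring

lemma hasSum_Aa {c b : ℝ} (hc : 0 < c) (hcb : c < b - 1) :
    HasSum (Aa c b) ((b - 1) / (b - 1 - c)) := by
  have hb1 : 0 < b - 1 := hc.trans hcb
  have hb : 0 < b := by linarith
  set u := Aa c (b - 1) with hu
  have key : ∀ n, Aa c b n = ((b - 1) / (b - 1 - c)) * (u n - u (n + 1)) := by
    intro n
    rw [hu, Aa_sub_succ hc hcb]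
    unfold Aa
    have h1 : poch (b - 1) (n + 1) = poch (b - 1) n * (b - 1 + n) := poch_succ _ n
    have h2 : poch (b - 1) (n + 1) = (b - 1) * poch (b - 1 + 1) n := poch_succ'' _ n
    have hbb : b - 1 + 1 = b := by ring
    rw [hbb] at h2
    have h3 : (b - 1) * poch b n = poch (b - 1) n * (b - 1 + n) := by rw [← h2, h1]
    have n1 : poch b n ≠ 0 := (poch_pos hb n).ne'
    have n2 : poch (b - 1) n ≠ 0 := (poch_pos hb1 n).ne'
    have n3 : (b - 1 + n : ℝ) ≠ 0 := by positivity
    have n4 : (b - 1 - c : ℝ) ≠ 0 := by linarith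
    have n5 : (b - 1 : ℝ) ≠ 0 := by linarith
    have step1 : ((b - 1) / (b - 1 - c)) * (poch c n / poch (b - 1) n * ((b - 1 - c) / (b - 1 + n)))
        = ((b - 1) * poch c n) / (poch (b - 1) n * (b - 1 + n)) := by
      field_simp
    rw [step1, ← h3, mul_div_mul_left _ _ n5]
  have hnn : ∀ n, 0 ≤ u n - u (n + 1) := fun n =>
    sub_nonneg.mpr (Aa_antitone hc hcb (Nat.le_succ n))
  have htel : HasSum (fun n => u n - u (n + 1)) 1 := by
    rw [hasSum_iff_tendsto_nat_of_nonneg hnn]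
    have : ∀ N, ∑ i ∈ Finset.range N, (u i - u (i + 1)) = u 0 - u N :=
      fun N => Finset.sum_range_sub' u N
    simp only [this, hu, Aa_zero]
    have := tendsto_Aa hc hcb
    have h := tendsto_const_nhds (x := (1:ℝ)) (f := atTop (α := ℕ)) |>.sub this
    simp at h
    refine h.congr fun n => ?_
    rw [Finset.sum_range_sub' (Aa c (b - 1)) n, Aa_zero]
  have hfin := htel.mul_left ((b - 1) / (b - 1 - c))
  rw [mul_one] at hfin
  have heq : (fun n => ((b - 1) / (b - 1 - c)) * (u n - u (n + 1))) = Aa c b :=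
    funext fun n => (key n).symm
  rwa [heq] at hfin

noncomputable def tS (c b : ℝ) (n : ℕ) : ℝ := poch c n / ((n + 1) * poch b n)

lemma tS_nonneg {c b : ℝ} (hc : 0 < c) (hb : 0 < b) (n : ℕ) : 0 ≤ tS c b n := by
  unfold tS
  have h1 := poch_pos hc n
  have h2 := poch_pos hb n
  positivity

lemma tS_le_Aa {c b : ℝ} (hc : 0 < c) (hb : 0 < b) (n : ℕ) : tS c b n ≤ Aa c b n := by
  unfold tS Aa
  have h1 := poch_pos hc n
  have h2 := poch_pos hb n
  rw [div_le_div_iff₀ (by positivity) (by positivity)]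
  nlinarith [mul_pos h1 h2, mul_nonneg (h1.le) (mul_nonneg (h2.le) (Nat.cast_nonneg n))]

lemma summable_tS_big {c b : ℝ} (hc : 0 < c) (hcb : c < b - 1) : Summable (tS c b) :=
  (hasSum_Aa hc hcb).summable.of_nonneg_of_le (fun n => tS_nonneg hc (by linarith) n)
    (fun n => tS_le_Aa hc (by linarith) n)

lemma tS_key {c g : ℝ} (hc : 0 < c) (hg1 : 1 < g) (n : ℕ) :
    tS c g n = ((g - 1) / g) * tS c (g + 1) n + (1 / g) * Aa c (g + 1) n := by
  unfold tS Aa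
  have hg : (0:ℝ) < g := by linarith
  have h3 : g * poch (g + 1) n = poch g n * (g + n) := by
    rw [← poch_succ'' g n, poch_succ g n]
  have n1 : poch g n ≠ 0 := (poch_pos hg n).ne'
  have n2 : poch (g + 1) n ≠ 0 := (poch_pos (by linarith) n).ne'
  have n3 : (n + 1 : ℝ) ≠ 0 := by positivity
  have n4 : g ≠ 0 := hg.ne'
  have n5 : (g + n : ℝ) ≠ 0 := by positivity
  have hsub : poch (g + 1) n = poch g n * (g + n) / g := by
    rw [eq_div_iff n4]
    linear_combination h3
  rw [hsub]
  field_simp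
  ring

lemma summable_tS {c g : ℝ} (hc : 0 < c) (hcg : c < g) (hg1 : 1 < g) : Summable (tS c g) := by
  have hA : Summable (Aa c (g + 1)) := (hasSum_Aa hc (by linarith)).summable
  have hS1 : Summable (tS c (g + 1)) := summable_tS_big hc (by linarith)
  exact ((hS1.mul_left ((g - 1) / g)).add (hA.mul_left (1 / g))).congr
    fun n => (tS_key hc hg1 n).symm

lemma S_rec {c g : ℝ} (hc : 0 < c) (hcg : c < g) (hg1 : 1 < g) :
    ∑' n, tS c g n = ((g - 1) / g) * ∑' n, tS c (g + 1) n + 1 / (g - c) := by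
  have hg : (0:ℝ) < g := by linarith
  have hA : HasSum (Aa c (g + 1)) ((g + 1 - 1) / (g + 1 - 1 - c)) := hasSum_Aa hc (by linarith)
  have hS1 : Summable (tS c (g + 1)) := summable_tS_big hc (by linarith)
  calc ∑' n, tS c g n
      = ∑' n, (((g - 1) / g) * tS c (g + 1) n + (1 / g) * Aa c (g + 1) n) :=
        tsum_congr fun n => tS_key hc hg1 n
    _ = ((g - 1) / g) * ∑' n, tS c (g + 1) n + (1 / g) * ∑' n, Aa c (g + 1) n := by
        rw [Summable.tsum_add (hS1.mul_left _) (hA.summable.mul_left _), tsum_mul_left, tsum_mul_left]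
    _ = ((g - 1) / g) * ∑' n, tS c (g + 1) n + 1 / (g - c) := by
        rw [hA.tsum_eq]
        congr 1
        have : g + 1 - 1 = g := by ring
        rw [this]
        rw [div_mul_div_comm, one_mul]
        rw [← div_div, div_self hg.ne']

noncomputable def rR (c g : ℝ) (m : ℕ) : ℝ := 1 / ((g - 1 + m) * (g - c + m))

lemma summable_rR {c g : ℝ} (hcg : c < g) (hg1 : 1 < g) : Summable (rR c g) := by
  set ε : ℝ := min (min (g - 1) (g - c)) 1 with hε
  have hε0 : 0 < ε := by
    apply lt_min (lt_min (by linarith) (by linarith)) one_pos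
  have hε1 : ε ≤ 1 := min_le_right _ _
  have hmaj : Summable (fun m : ℕ => (1 / ε ^ 2) * (1 / ((m + 1 : ℕ) : ℝ) ^ 2)) := by
    apply Summable.mul_left
    exact (summable_nat_add_iff (f := fun m : ℕ => 1 / (m : ℝ) ^ 2) 1).mpr
      (by rw [summable_one_div_nat_pow]; norm_num)
  apply hmaj.of_nonneg_of_le
  · intro m
    unfold rR
    have h1 : (0:ℝ) < g - 1 + m := by have : (0:ℝ) ≤ m := Nat.cast_nonneg m; linarith
    have h2 : (0:ℝ) < g - c + m := by have : (0:ℝ) ≤ m := Nat.cast_nonneg m; linarith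
    positivity
  · intro m
    unfold rR
    have hm : (0:ℝ) ≤ m := Nat.cast_nonneg m
    have h1 : ε * (m + 1) ≤ g - 1 + m := by
      have : ε ≤ g - 1 := le_trans (min_le_left _ _) (min_le_left _ _)
      nlinarith
    have h2 : ε * (m + 1) ≤ g - c + m := by
      have : ε ≤ g - c := le_trans (min_le_left _ _) (min_le_right _ _)
      nlinarith
    have hp : (0:ℝ) < ε * (m + 1) := by positivity
    rw [div_mul_div_comm, one_mul]
    apply one_div_le_one_div_of_le (by positivity)
    push_cast
    calc ε ^ 2 * (m + 1 : ℝ) ^ 2 = (ε * (m + 1)) * (ε * (m + 1)) := by ring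
      _ ≤ (g - 1 + m) * (g - c + m) := by
          apply mul_le_mul h1 h2 hp.le
          have : (0:ℝ) < g - 1 + m := by linarith
          linarith

lemma rR_shift (c g : ℝ) (m : ℕ) : rR c (g + 1) m = rR c g (m + 1) := by
  unfold rR
  push_cast
  ring_nf

lemma R_rec {c g : ℝ} (hcg : c < g) (hg1 : 1 < g) :
    ∑' m, rR c g m = rR c g 0 + ∑' m, rR c (g + 1) m := by
  rw [Summable.tsum_eq_zero_add (summable_rR hcg hg1)]
  congr 1
  exact tsum_congr fun m => (rR_shift c g m).symm

lemma tS_mono_b {c b b' : ℝ} (hc : 0 < c) (hb : 0 < b) (hbb : b ≤ b') (n : ℕ) :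
    tS c b' n ≤ tS c b n := by
  unfold tS
  have h1 := poch_pos hc n
  have h2 := poch_pos hb n
  have h3 : poch b n ≤ poch b' n := by
    unfold poch
    apply Finset.prod_le_prod
    · intro i _; positivity
    · intro i _; linarith
  gcongr

lemma D_step {c g : ℝ} (hc : 0 < c) (hcg : c < g) (hg1 : 1 < g) :
    (∑' n, tS c g n) / (g - 1) - ∑' m, rR c g m
      = (∑' n, tS c (g + 1) n) / g - ∑' m, rR c (g + 1) m := by
  rw [S_rec hc hcg hg1, R_rec hcg hg1]
  have h0 : rR c g 0 = 1 / ((g - 1) * (g - c)) := by unfold rR; norm_num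
  rw [h0]
  have n1 : g - 1 ≠ 0 := by linarith
  have n2 : (g:ℝ) ≠ 0 := by linarith
  have n3 : g - c ≠ 0 := by linarith
  field_simp
  ring

lemma D_iter {c f : ℝ} (hc : 0 < c) (hcf : c < f) (hf : 1 < f) (k : ℕ) :
    (∑' n, tS c f n) / (f - 1) - ∑' m, rR c f m
      = (∑' n, tS c (f + k) n) / (f + k - 1) - ∑' m, rR c (f + k) m := by
  induction k with
  | zero => norm_num
  | succ k ih =>
    rw [ih, D_step hc (by push_cast; linarith [Nat.cast_nonneg (α := ℝ) k] : c < f + (k:ℝ))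
      (by push_cast; linarith [Nat.cast_nonneg (α := ℝ) k] : (1:ℝ) < f + (k:ℝ))]
    push_cast
    ring_nf

lemma kk_pos {f : ℝ} (hf : 1 < f) (k : ℕ) : (0:ℝ) < f + k - 1 := by
  have : (0:ℝ) ≤ k := Nat.cast_nonneg k
  linarith

lemma tendsto_Spart {c f : ℝ} (hc : 0 < c) (hcf : c < f) (hf : 1 < f) :
    Tendsto (fun k : ℕ => (∑' n, tS c (f + k) n) / (f + k - 1)) atTop (nhds 0) := by
  set M := ∑' n, tS c f n with hM
  have hfk : ∀ k : ℕ, c < f + k ∧ (1:ℝ) < f + k := by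
    intro k
    have : (0:ℝ) ≤ k := Nat.cast_nonneg k
    constructor <;> linarith
  have hSum : ∀ k : ℕ, Summable (tS c (f + k)) := fun k =>
    summable_tS hc (hfk k).1 (hfk k).2
  have hub : ∀ k : ℕ, (∑' n, tS c (f + k) n) ≤ M := by
    intro k
    apply Summable.tsum_le_tsum _ (hSum k) (summable_tS hc hcf hf)
    intro n
    exact tS_mono_b hc (by linarith) (by have : (0:ℝ) ≤ k := Nat.cast_nonneg k; linarith) n
  have hnn : ∀ k : ℕ, 0 ≤ ∑' n, tS c (f + k) n := fun k =>
    tsum_nonneg fun n => tS_nonneg hc (by linarith [(hfk k).2]) n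
  have hdivlim : Tendsto (fun k : ℕ => M / (f + k - 1)) atTop (nhds 0) := by
    apply Tendsto.div_atTop (tendsto_const_nhds)
    have heq : (fun k : ℕ => f + (k:ℝ) - 1) = fun k : ℕ => (k:ℝ) + (f - 1) := by
      funext k; ring
    rw [heq]
    exact tendsto_atTop_add_const_right atTop (f - 1) tendsto_natCast_atTop_atTop
  apply squeeze_zero (fun k => div_nonneg (hnn k) (kk_pos hf k).le) _ hdivlim
  intro k
  exact (div_le_div_iff_of_pos_right (kk_pos hf k)).mpr (hub k)

lemma tendsto_Rpart {c f : ℝ} (hcf : c < f) (hf : 1 < f) :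
    Tendsto (fun k : ℕ => ∑' m, rR c (f + k) m) atTop (nhds 0) := by
  have heq : (fun k : ℕ => ∑' m, rR c (f + k) m) = fun k : ℕ => ∑' m, rR c f (m + k) := by
    funext k
    apply tsum_congr
    intro m
    unfold rR
    push_cast
    ring_nf
  rw [heq]
  exact tendsto_sum_nat_add (rR c f)

lemma D_zero {c f : ℝ} (hc : 0 < c) (hcf : c < f) (hf : 1 < f) :
    (∑' n, tS c f n) / (f - 1) - ∑' m, rR c f m = 0 := by
  have h1 : Tendsto (fun _ : ℕ => (∑' n, tS c f n) / (f - 1) - ∑' m, rR c f m) atTop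
      (nhds ((∑' n, tS c f n) / (f - 1) - ∑' m, rR c f m)) := tendsto_const_nhds
  have h2 : Tendsto (fun _ : ℕ => (∑' n, tS c f n) / (f - 1) - ∑' m, rR c f m) atTop
      (nhds 0) := by
    have heq : (fun _ : ℕ => (∑' n, tS c f n) / (f - 1) - ∑' m, rR c f m)
        = fun k : ℕ => (∑' n, tS c (f + k) n) / (f + k - 1) - ∑' m, rR c (f + k) m := by
      funext k
      exact D_iter hc hcf hf k
    rw [heq]
    have := (tendsto_Spart hc hcf hf).sub (tendsto_Rpart hcf hf)
    simpa using this
  exact tendsto_nhds_unique h1 h2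

lemma poch_one (n : ℕ) : poch 1 n = n.factorial := by
  induction n with
  | zero => simp [poch]
  | succ n ih =>
    rw [poch_succ, ih]
    push_cast [Nat.factorial_succ]
    ring

lemma poch_two (n : ℕ) : poch 2 n = (n + 1).factorial := by
  have h := poch_succ'' 1 n
  rw [poch_one] at h
  norm_num at h
  exact h.symm

/-- Gauss hypergeometric function ₂F₁, defined by its power series. -/
noncomputable def hyp2F1 (a b c x : ℝ) : ℝ :=
  ∑' n : ℕ, poch a n * poch b n / (poch c n * n.factorial) * x ^ n

/-- Generalized hypergeometric function ₃F₂, defined by its power series. -/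
noncomputable def hyp3F2 (a₁ a₂ a₃ b₁ b₂ x : ℝ) : ℝ :=
  ∑' n : ℕ, poch a₁ n * poch a₂ n * poch a₃ n / (poch b₁ n * poch b₂ n * n.factorial) * x ^ n

theorem hyp3F2_sum_formula (c f : ℝ) (hc : 0 < c) (hcf : c < f) (hf : 1 < f) :
    hyp3F2 1 1 c 2 f 1 = (f - 1) * ∑' n : ℕ, 1 / ((f - 1 + n) * (f - c + n)) := by
  have hterm : ∀ n : ℕ, poch 1 n * poch 1 n * poch c n / (poch 2 n * poch f n * n.factorial)
      * (1:ℝ) ^ n = tS c f n := by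
    intro n
    rw [one_pow, mul_one, poch_one, poch_two, Nat.factorial_succ]
    unfold tS
    have h1 : ((n.factorial : ℝ)) ≠ 0 := Nat.cast_ne_zero.mpr n.factorial_ne_zero
    have h2 : poch f n ≠ 0 := (poch_pos (by linarith) n).ne'
    have h3 : ((n:ℝ) + 1) ≠ 0 := by positivity
    push_cast
    field_simp
  have hL : hyp3F2 1 1 c 2 f 1 = ∑' n, tS c f n := by
    unfold hyp3F2
    exact tsum_congr hterm
  have hD := D_zero hc hcf hf
  have hR : (∑' m, rR c f m) = ∑' n : ℕ, 1 / ((f - 1 + n) * (f - c + n)) := rfl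
  rw [hL, ← hR]
  have hf1 : f - 1 ≠ 0 := by linarith
  have := sub_eq_zero.mp hD
  rw [div_eq_iff hf1] at this
  rw [this]
  ring
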